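/- Let d ≥ 2 and 1 ≤ r ≤ d be integers, let P be a (d,r)-Haar matrix, let e₁ ∈ ℝ^d be the first standard basis vector, and set u := PP^⊤e₁/‖P^⊤e₁‖ (well-defined almost surely). Then E[uu^⊤] = (d(r−1))/(r(d−1)) · e₁e₁^⊤ + ((d−r)/(r(d−1))) · I_d. -/

import Mathlib

open MeasureTheory ProbabilityTheory Real Matrix

noncomputable section

instance matrixMeasurableSpace {m n α : Type*} [MeasurableSpace α] :
    MeasurableSpace (Matrix m n α) :=
  inferInstanceAs (MeasurableSpace (m → n → α))

/-- Matrix-vector multiplication acting on Euclidean spaces. -/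
def mulVecE {m n : ℕ} (A : Matrix (Fin m) (Fin n) ℝ) (v : EuclideanSpace ℝ (Fin n)) :
    EuclideanSpace ℝ (Fin m) :=
  (EuclideanSpace.equiv (Fin m) ℝ).symm (A.mulVec (EuclideanSpace.equiv (Fin n) ℝ v))

/-- τ = √(d/r) Γ((r+1)/2) Γ(d/2) / (Γ(r/2) Γ((d+1)/2)). -/
def tauConst (d r : ℕ) : ℝ :=
  Real.sqrt ((d : ℝ) / r) *
    (Real.Gamma (((r : ℝ) + 1) / 2) * Real.Gamma ((d : ℝ) / 2)) /
      (Real.Gamma ((r : ℝ) / 2) * Real.Gamma (((d : ℝ) + 1) / 2))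

/-- A probability measure on the orthogonal group O(d) is THE normalized Haar probability
measure iff it is a left-invariant probability measure. -/
def IsHaarOrth {d : ℕ} (μH : Measure (Matrix.orthogonalGroup (Fin d) ℝ)) : Prop :=
  IsProbabilityMeasure μH ∧
    ∀ U : Matrix.orthogonalGroup (Fin d) ℝ, Measure.map (fun V => U * V) μH = μH

/-- A (d,r)-Haar random matrix: distributed as √(d/r) times the first r columns of a
Haar-distributed orthogonal matrix. -/
def IsHaarMatrix {d r : ℕ} {Ω : Type*} [MeasurableSpace Ω] (ℙ' : Measure Ω) (hrd : r ≤ d)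
    (P : Ω → Matrix (Fin d) (Fin r) ℝ) : Prop :=
  ∃ μH : Measure (Matrix.orthogonalGroup (Fin d) ℝ), IsHaarOrth μH ∧
    Measure.map P ℙ' =
      Measure.map (fun U : Matrix.orthogonalGroup (Fin d) ℝ =>
        Real.sqrt ((d : ℝ) / r) •
          (U : Matrix (Fin d) (Fin d) ℝ).submatrix id (Fin.castLE hrd)) μH


open scoped ENNReal

namespace S13

abbrev OG (d : ℕ) := Matrix.orthogonalGroup (Fin d) ℝ

variable {d r : ℕ}

lemma measurable_coe : Measurable (fun U : OG d => (U : Matrix (Fin d) (Fin d) ℝ)) :=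
  measurable_subtype_coe

lemma measurable_entry (i j : Fin d) :
    Measurable (fun U : OG d => (U : Matrix (Fin d) (Fin d) ℝ) i j) :=
  ((measurable_pi_apply j).comp (measurable_pi_apply i)).comp measurable_coe

lemma measurable_mulL (V : OG d) : Measurable (fun U : OG d => V * U) := by
  have h : Measurable (fun U : OG d => ((V * U : OG d) : Matrix (Fin d) (Fin d) ℝ)) := by
    simp only [Matrix.UnitaryGroup.mul_val]
    apply measurable_pi_lambda
    intro i
    apply measurable_pi_lambda
    intro j
    simp only [Matrix.mul_apply]
    exact Finset.measurable_sum _ fun k _ => (measurable_entry k j).const_mul _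
  exact Measurable.subtype_mk h

lemma integral_invariance {μH : Measure (OG d)} (hH : IsHaarOrth μH) (V : OG d)
    {f : OG d → ℝ} (hf : Measurable f) :
    ∫ U, f (V * U) ∂μH = ∫ U, f U ∂μH := by
  conv_rhs => rw [← hH.2 V]
  rw [integral_map (measurable_mulL V).aemeasurable]
  rw [hH.2 V]
  exact hf.aestronglyMeasurable

lemma measure_invariance {μH : Measure (OG d)} (hH : IsHaarOrth μH) (V : OG d)
    {Z : Set (OG d)} (hZ : MeasurableSet Z) :
    μH ((fun U => V * U) ⁻¹' Z) = μH Z := by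
  conv_rhs => rw [← hH.2 V]
  rw [Measure.map_apply (measurable_mulL V) hZ]

/-- squared norm of the first r entries of row z -/
def S (hrd : r ≤ d) (z : Fin d) (U : OG d) : ℝ :=
  ∑ k : Fin r, (U : Matrix (Fin d) (Fin d) ℝ) z (Fin.castLE hrd k) *
    (U : Matrix (Fin d) (Fin d) ℝ) z (Fin.castLE hrd k)

def N (hrd : r ≤ d) (z : Fin d) (i : Fin d) (U : OG d) : ℝ :=
  ∑ k : Fin r, (U : Matrix (Fin d) (Fin d) ℝ) i (Fin.castLE hrd k) *
    (U : Matrix (Fin d) (Fin d) ℝ) z (Fin.castLE hrd k)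

def f (hrd : r ≤ d) (z : Fin d) (i j : Fin d) (U : OG d) : ℝ :=
  (S hrd z U)⁻¹ * (N hrd z i U * N hrd z j U)

lemma row_orthonormal (U : OG d) (i j : Fin d) :
    ∑ k : Fin d, (U : Matrix (Fin d) (Fin d) ℝ) i k * (U : Matrix (Fin d) (Fin d) ℝ) j k
      = if i = j then (1:ℝ) else 0 := by
  have h := (Unitary.mem_iff.mp U.2).2
  have := congrFun (congrFun h i) j
  simpa [Matrix.mul_apply, Matrix.star_apply, Matrix.one_apply] using this

lemma col_orthonormal (U : OG d) (k l : Fin d) :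
    ∑ m : Fin d, (U : Matrix (Fin d) (Fin d) ℝ) m k * (U : Matrix (Fin d) (Fin d) ℝ) m l
      = if k = l then (1:ℝ) else 0 := by
  have h := (Unitary.mem_iff.mp U.2).1
  have := congrFun (congrFun h k) l
  simpa [Matrix.mul_apply, Matrix.star_apply, Matrix.one_apply, mul_comm] using this

lemma S_nonneg (hrd : r ≤ d) (z : Fin d) (U : OG d) : 0 ≤ S hrd z U :=
  Finset.sum_nonneg fun k _ => mul_self_nonneg _

lemma sum_sq_row_le (hrd : r ≤ d) (U : OG d) (i : Fin d) :
    ∑ k : Fin r, ((U : Matrix (Fin d) (Fin d) ℝ) i (Fin.castLE hrd k))^2 ≤ 1 := by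
  have h1 : ∑ k : Fin r, ((U : Matrix (Fin d) (Fin d) ℝ) i (Fin.castLE hrd k))^2
      = ∑ k ∈ Finset.univ.map (Fin.castLEEmb hrd), ((U : Matrix (Fin d) (Fin d) ℝ) i k)^2 := by
    rw [Finset.sum_map]; rfl
  rw [h1]
  calc ∑ k ∈ Finset.univ.map (Fin.castLEEmb hrd), ((U : Matrix (Fin d) (Fin d) ℝ) i k)^2
      ≤ ∑ k : Fin d, ((U : Matrix (Fin d) (Fin d) ℝ) i k)^2 :=
        Finset.sum_le_sum_of_subset_of_nonneg (Finset.subset_univ _)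
          (fun _ _ _ => sq_nonneg _)
    _ = 1 := by simpa [pow_two] using row_orthonormal U i i

lemma N_sq_le (hrd : r ≤ d) (z : Fin d) (i : Fin d) (U : OG d) :
    (N hrd z i U)^2 ≤ S hrd z U := by
  have h := Finset.sum_mul_sq_le_sq_mul_sq Finset.univ
    (fun k : Fin r => (U : Matrix (Fin d) (Fin d) ℝ) i (Fin.castLE hrd k))
    (fun k : Fin r => (U : Matrix (Fin d) (Fin d) ℝ) z (Fin.castLE hrd k))
  have h2 : S hrd z U = ∑ k : Fin r,
      ((U : Matrix (Fin d) (Fin d) ℝ) z (Fin.castLE hrd k))^2 := by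
    simp [S, pow_two]
  calc (N hrd z i U)^2 ≤ (∑ k : Fin r, ((U : Matrix (Fin d) (Fin d) ℝ) i (Fin.castLE hrd k))^2) *
        (∑ k : Fin r, ((U : Matrix (Fin d) (Fin d) ℝ) z (Fin.castLE hrd k))^2) := h
    _ ≤ 1 * (∑ k : Fin r, ((U : Matrix (Fin d) (Fin d) ℝ) z (Fin.castLE hrd k))^2) := by
        apply mul_le_mul_of_nonneg_right (sum_sq_row_le hrd U i)
        exact Finset.sum_nonneg fun _ _ => sq_nonneg _
    _ = S hrd z U := by rw [one_mul, ← h2]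

lemma abs_N_le (hrd : r ≤ d) (z : Fin d) (i : Fin d) (U : OG d) :
    |N hrd z i U| ≤ Real.sqrt (S hrd z U) := by
  rw [← Real.sqrt_sq_eq_abs]
  exact Real.sqrt_le_sqrt (N_sq_le hrd z i U)

lemma abs_f_le_one (hrd : r ≤ d) (z : Fin d) (i j : Fin d) (U : OG d) :
    |f hrd z i j U| ≤ 1 := by
  by_cases hS : S hrd z U = 0
  · have hNi : N hrd z i U = 0 := by
      have := abs_N_le hrd z i U
      rw [hS, Real.sqrt_zero] at this
      exact abs_eq_zero.mp (le_antisymm this (abs_nonneg _))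
    simp [f, hNi]
  · have hSpos : 0 < S hrd z U := lt_of_le_of_ne (S_nonneg hrd z U) (Ne.symm hS)
    rw [f, abs_mul, abs_mul, abs_inv, abs_of_pos hSpos]
    rw [inv_mul_le_iff₀ hSpos, mul_one]
    calc |N hrd z i U| * |N hrd z j U|
        ≤ Real.sqrt (S hrd z U) * Real.sqrt (S hrd z U) :=
          mul_le_mul (abs_N_le hrd z i U) (abs_N_le hrd z j U) (abs_nonneg _)
            (Real.sqrt_nonneg _)
      _ = S hrd z U := Real.mul_self_sqrt hSpos.le

lemma N_z_eq_S (hrd : r ≤ d) (z : Fin d) (U : OG d) : N hrd z z U = S hrd z U := rfl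

lemma sum_N_sq (hrd : r ≤ d) (z : Fin d) (U : OG d) :
    ∑ i : Fin d, (N hrd z i U)^2 = S hrd z U := by
  have key : ∀ i, (N hrd z i U)^2 = ∑ k : Fin r, ∑ l : Fin r,
      ((U : Matrix (Fin d) (Fin d) ℝ) i (Fin.castLE hrd k) *
       (U : Matrix (Fin d) (Fin d) ℝ) i (Fin.castLE hrd l)) *
      ((U : Matrix (Fin d) (Fin d) ℝ) z (Fin.castLE hrd k) *
       (U : Matrix (Fin d) (Fin d) ℝ) z (Fin.castLE hrd l)) := by
    intro i
    rw [pow_two, N, Finset.sum_mul_sum]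
    apply Finset.sum_congr rfl; intro k _
    apply Finset.sum_congr rfl; intro l _
    ring
  simp_rw [key]
  rw [Finset.sum_comm]
  have : ∀ k : Fin r, ∑ i : Fin d, ∑ l : Fin r,
      ((U : Matrix (Fin d) (Fin d) ℝ) i (Fin.castLE hrd k) *
       (U : Matrix (Fin d) (Fin d) ℝ) i (Fin.castLE hrd l)) *
      ((U : Matrix (Fin d) (Fin d) ℝ) z (Fin.castLE hrd k) *
       (U : Matrix (Fin d) (Fin d) ℝ) z (Fin.castLE hrd l)) =
      (U : Matrix (Fin d) (Fin d) ℝ) z (Fin.castLE hrd k) *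
       (U : Matrix (Fin d) (Fin d) ℝ) z (Fin.castLE hrd k) := by
    intro k
    rw [Finset.sum_comm]
    have : ∀ l : Fin r, ∑ i : Fin d,
        ((U : Matrix (Fin d) (Fin d) ℝ) i (Fin.castLE hrd k) *
         (U : Matrix (Fin d) (Fin d) ℝ) i (Fin.castLE hrd l)) *
        ((U : Matrix (Fin d) (Fin d) ℝ) z (Fin.castLE hrd k) *
         (U : Matrix (Fin d) (Fin d) ℝ) z (Fin.castLE hrd l)) =
        (if k = l then (1:ℝ) else 0) *
        ((U : Matrix (Fin d) (Fin d) ℝ) z (Fin.castLE hrd k) *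
         (U : Matrix (Fin d) (Fin d) ℝ) z (Fin.castLE hrd l)) := by
      intro l
      rw [← Finset.sum_mul, col_orthonormal]
      congr 1
      simp [Fin.castLE_inj]
    simp_rw [this]
    simp
  simp_rw [this]
  rfl

/-- sign flip at coordinate m, as an element of O(d) -/
def flip (m : Fin d) : OG d :=
  ⟨Matrix.diagonal (fun a => if a = m then (-1:ℝ) else 1), by
    rw [Matrix.mem_unitaryGroup_iff]
    have hstar : star (Matrix.diagonal (fun a : Fin d => if a = m then (-1:ℝ) else 1))
        = Matrix.diagonal (fun a => if a = m then (-1:ℝ) else 1) := by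
      ext i j
      simp only [Matrix.star_apply, Matrix.diagonal_apply, star_trivial]
      by_cases h : i = j
      · subst h; simp
      · simp [h, Ne.symm h]
    rw [hstar, Matrix.diagonal_mul_diagonal]
    convert Matrix.diagonal_one with a
    by_cases h : a = m <;> simp [h]⟩

lemma flip_entry (m : Fin d) (U : OG d) (a b : Fin d) :
    ((flip m * U : OG d) : Matrix (Fin d) (Fin d) ℝ) a b
      = (if a = m then (-1:ℝ) else 1) * (U : Matrix (Fin d) (Fin d) ℝ) a b := by
  show ((flip m : OG d).1 * (U : Matrix (Fin d) (Fin d) ℝ)) a b = _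
  rw [show (flip m : OG d).1 = Matrix.diagonal (fun a => if a = m then (-1:ℝ) else 1) from rfl]
  rw [Matrix.diagonal_mul]

/-- permutation matrix of σ, as an element of O(d) -/
def permOG (σ : Equiv.Perm (Fin d)) : OG d :=
  ⟨Matrix.of fun a b => if σ a = b then (1:ℝ) else 0, by
    rw [Matrix.mem_unitaryGroup_iff]
    ext i j
    simp only [Matrix.mul_apply, Matrix.star_apply, Matrix.of_apply, star_trivial,
      Matrix.one_apply, ite_mul, one_mul, zero_mul]
    rw [Finset.sum_ite_eq]
    simp [Equiv.apply_eq_iff_eq, eq_comm]⟩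

lemma perm_entry (σ : Equiv.Perm (Fin d)) (U : OG d) (a b : Fin d) :
    ((permOG σ * U : OG d) : Matrix (Fin d) (Fin d) ℝ) a b
      = (U : Matrix (Fin d) (Fin d) ℝ) (σ a) b := by
  show ((permOG σ : OG d).1 * (U : Matrix (Fin d) (Fin d) ℝ)) a b = _
  rw [show (permOG σ : OG d).1 = Matrix.of fun a b => if σ a = b then (1:ℝ) else 0 from rfl]
  simp only [Matrix.mul_apply, Matrix.of_apply, ite_mul, one_mul, zero_mul]
  rw [Finset.sum_ite_eq Finset.univ (σ a)]
  simp

lemma vecMulVec_sq (w : Fin d → ℝ) :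
    Matrix.vecMulVec w w * Matrix.vecMulVec w w = (∑ c, w c * w c) • Matrix.vecMulVec w w := by
  ext a b
  simp only [Matrix.mul_apply, Matrix.vecMulVec_apply, Matrix.smul_apply, smul_eq_mul]
  rw [Finset.sum_congr rfl (fun c _ => show w a * w c * (w c * w b)
    = (w c * w c) * (w a * w b) by ring), ← Finset.sum_mul]

/-- Householder-type symmetric orthogonal matrix with prescribed unit first column. -/
def houseMat (z : Fin d) (x : Fin d → ℝ) : Matrix (Fin d) (Fin d) ℝ :=
  let w : Fin d → ℝ := fun j => x j - (if j = z then 1 else 0)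
  1 - (2 * (∑ c, w c * w c)⁻¹) • Matrix.vecMulVec w w

lemma houseMat_symm (z : Fin d) (x : Fin d → ℝ) (a b : Fin d) :
    houseMat z x a b = houseMat z x b a := by
  simp only [houseMat, Matrix.sub_apply, Matrix.smul_apply, Matrix.vecMulVec_apply,
    Matrix.one_apply, smul_eq_mul]
  rw [if_congr (Iff.intro Eq.symm Eq.symm) rfl rfl]
  ring

lemma houseMat_mem (z : Fin d) (x : Fin d → ℝ) :
    houseMat z x ∈ Matrix.unitaryGroup (Fin d) ℝ := by
  rw [Matrix.mem_unitaryGroup_iff]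
  set w : Fin d → ℝ := fun j => x j - (if j = z then 1 else 0) with hw
  set q : ℝ := ∑ c, w c * w c with hq
  have hstar : star (houseMat z x) = houseMat z x := by
    ext a b
    rw [Matrix.star_apply, star_trivial, houseMat_symm]
  rw [hstar]
  have hH : houseMat z x = 1 - (2 * q⁻¹) • Matrix.vecMulVec w w := rfl
  rw [hH]
  have expand : (1 - (2 * q⁻¹) • Matrix.vecMulVec w w) * (1 - (2 * q⁻¹) • Matrix.vecMulVec w w)
      = 1 - (2 * (2 * q⁻¹)) • Matrix.vecMulVec w w
        + ((2 * q⁻¹) * (2 * q⁻¹)) • (Matrix.vecMulVec w w * Matrix.vecMulVec w w) := by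
    rw [Matrix.sub_mul, Matrix.mul_sub, Matrix.mul_sub]
    simp only [Matrix.mul_one, Matrix.one_mul, smul_mul_assoc, mul_smul_comm, smul_smul]
    module
  rw [expand, vecMulVec_sq, ← hq, smul_smul]
  by_cases hq0 : q = 0
  · have hwz : ∀ c, w c = 0 := by
      intro c
      have h2 : ∀ i ∈ Finset.univ, w i * w i = 0 := by
        rw [← Finset.sum_eq_zero_iff_of_nonneg (fun i _ => mul_self_nonneg (w i))]
        exact hq0 ▸ hq.symm
      exact mul_self_eq_zero.mp (h2 c (Finset.mem_univ c))
    have : Matrix.vecMulVec w w = 0 := by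
      ext a b; simp [Matrix.vecMulVec_apply, hwz]
    rw [this]
    simp
  · have : (2 * (2 * q⁻¹)) = 2 * q⁻¹ * (2 * q⁻¹) * q := by
      field_simp
    rw [this]
    abel
  done

lemma houseMat_row (z : Fin d) (x : Fin d → ℝ) (hx : ∑ j, x j * x j = 1) (a : Fin d) :
    houseMat z x z a = x a := by
  set w : Fin d → ℝ := fun j => x j - (if j = z then 1 else 0) with hw
  set q : ℝ := ∑ c, w c * w c with hq
  have hqval : q = 2 - 2 * x z := by
    rw [hq]
    have : ∀ c, w c * w c = x c * x c - 2 * (if c = z then 1 else 0) * x c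
        + (if c = z then 1 else 0) := by
      intro c
      by_cases h : c = z <;> simp [hw, h] <;> ring
    simp_rw [this]
    rw [Finset.sum_add_distrib, Finset.sum_sub_distrib, hx]
    simp [Finset.sum_ite_eq]
    ring
  have hH : houseMat z x z a = (if z = a then (1:ℝ) else 0) - (2 * q⁻¹) * (w z * w a) := by
    simp [houseMat, Matrix.sub_apply, Matrix.smul_apply, Matrix.vecMulVec_apply,
      Matrix.one_apply, ← hw, ← hq]
    exact Or.inl rfl
  rw [hH]
  have hwz : w z = x z - 1 := by simp [hw]
  by_cases hxz : x z = 1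
  · -- then q = 0, w = 0 vector; x = e_z
    have hq0 : q = 0 := by rw [hqval, hxz]; ring
    have hsum : ∑ j ∈ (Finset.univ.erase z), x j * x j = 0 := by
      have hdec := Finset.add_sum_erase Finset.univ (fun j => x j * x j) (Finset.mem_univ z)
      have hx2 : x z * x z + ∑ j ∈ Finset.univ.erase z, x j * x j = 1 := by
        rw [hdec]; exact hx
      rw [hxz] at hx2
      linarith
    by_cases ha : a = z
    · subst ha
      rw [hq0]
      simp [hxz, hwz]
      try ring
    · have hxa : x a = 0 := by
        have h2 : ∀ j ∈ Finset.univ.erase z, x j * x j = 0 := by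
          rw [← Finset.sum_eq_zero_iff_of_nonneg (fun i _ => mul_self_nonneg (x i))]
          exact hsum
        exact mul_self_eq_zero.mp (h2 a (by simp [ha]))
      rw [hq0]
      simp [Ne.symm ha, hxa]
  · have hq0 : q ≠ 0 := by
      rw [hqval]; intro h; apply hxz; linarith
    have key : (2 * q⁻¹) * w z = -1 := by
      have h2 : 2 * w z = -q := by rw [hwz, hqval]; ring
      calc (2 * q⁻¹) * w z = q⁻¹ * (2 * w z) := by ring
        _ = q⁻¹ * (-q) := by rw [h2]
        _ = -1 := by field_simp
    have : (2 * q⁻¹) * (w z * w a) = -(w a) := by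
      rw [← mul_assoc, key]; ring
    rw [this]
    by_cases ha : z = a
    · subst ha
      rw [if_pos rfl, hwz]
      ring
    · have haz : ¬ a = z := fun h => ha h.symm
      rw [if_neg ha]
      simp only [hw, if_neg haz]
      ring

lemma vandermonde_li {b : ℕ} (hb : b ≤ d) (t : Fin b → ℝ) (ht : Function.Injective t) :
    LinearIndependent ℝ (fun i : Fin b => (fun j : Fin d => t i ^ (j : ℕ))) := by
  have hrows : LinearIndependent ℝ (fun i : Fin b => (Matrix.vandermonde t) i) := by
    rw [show (fun i : Fin b => (Matrix.vandermonde t) i) = (Matrix.vandermonde t).row from rfl,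
      Matrix.linearIndependent_rows_iff_isUnit]
    rw [Matrix.isUnit_iff_isUnit_det, isUnit_iff_ne_zero, Matrix.det_vandermonde]
    apply Finset.prod_ne_zero_iff.mpr
    intro i _
    apply Finset.prod_ne_zero_iff.mpr
    intro j hj
    have : t j ≠ t i := fun h => (Finset.mem_Ioi.mp hj).ne' (ht h)
    exact sub_ne_zero.mpr this
  apply LinearIndependent.of_comp (LinearMap.funLeft ℝ ℝ (Fin.castLE hb))
  convert hrows
  rfl

/-- The membership condition: the vector (t^j)_j is orthogonal to the first r columns of U. -/
def C (hrd : r ≤ d) (t : ℝ) (U : OG d) : Prop :=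
  ∀ k : Fin r, ∑ j : Fin d, (t ^ (j : ℕ)) * (U : Matrix (Fin d) (Fin d) ℝ) j (Fin.castLE hrd k) = 0

/-- the subspace of vectors orthogonal to the first r columns of U -/
def KerU (hrd : r ≤ d) (U : OG d) : Submodule ℝ (Fin d → ℝ) :=
  LinearMap.ker (Matrix.vecMulLinear ((U : Matrix (Fin d) (Fin d) ℝ).submatrix id (Fin.castLE hrd)))

lemma col_orthonormal' (U : OG d) (k l : Fin d) :
    ∑ m : Fin d, (U : Matrix (Fin d) (Fin d) ℝ) m k * (U : Matrix (Fin d) (Fin d) ℝ) m l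
      = if k = l then (1:ℝ) else 0 := by
  have h := (Unitary.mem_iff.mp U.2).1
  have := congrFun (congrFun h k) l
  simpa [Matrix.mul_apply, Matrix.star_apply, Matrix.one_apply, mul_comm] using this

lemma finrank_KerU (hrd : r ≤ d) (U : OG d) : Module.finrank ℝ (KerU hrd U) = d - r := by
  set L := Matrix.vecMulLinear
    ((U : Matrix (Fin d) (Fin d) ℝ).submatrix id (Fin.castLE hrd)) with hL
  have hsurj : Function.Surjective L := by
    intro y
    refine ⟨Matrix.mulVec ((U : Matrix (Fin d) (Fin d) ℝ).submatrix id (Fin.castLE hrd)) y, ?_⟩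
    funext k
    show ∑ m : Fin d, (∑ l : Fin r, (U : Matrix (Fin d) (Fin d) ℝ) m (Fin.castLE hrd l) * y l) *
        (U : Matrix (Fin d) (Fin d) ℝ) m (Fin.castLE hrd k) = y k
    rw [Finset.sum_congr rfl (fun m _ => Finset.sum_mul _ _ _), Finset.sum_comm]
    have : ∀ l : Fin r, ∑ m : Fin d,
        (U : Matrix (Fin d) (Fin d) ℝ) m (Fin.castLE hrd l) * y l *
        (U : Matrix (Fin d) (Fin d) ℝ) m (Fin.castLE hrd k)
        = (if l = k then (1:ℝ) else 0) * y l := by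
      intro l
      rw [Finset.sum_congr rfl (fun m _ => show
        (U : Matrix (Fin d) (Fin d) ℝ) m (Fin.castLE hrd l) * y l *
        (U : Matrix (Fin d) (Fin d) ℝ) m (Fin.castLE hrd k)
        = ((U : Matrix (Fin d) (Fin d) ℝ) m (Fin.castLE hrd l) *
           (U : Matrix (Fin d) (Fin d) ℝ) m (Fin.castLE hrd k)) * y l by ring),
        ← Finset.sum_mul, col_orthonormal' U]
      congr 1
      simp [Fin.castLE_inj]
    simp_rw [this]
    simp
  have hrange : Module.finrank ℝ (LinearMap.range L) = r := by
    rw [LinearMap.range_eq_top.mpr hsurj]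
    simp
  have h := LinearMap.finrank_range_add_finrank_ker L
  rw [hrange] at h
  simp only [Module.finrank_pi, Fintype.card_fin] at h
  have hker : KerU hrd U = LinearMap.ker L := rfl
  rw [hker]
  omega

lemma mem_KerU_iff (hrd : r ≤ d) (U : OG d) (y : Fin d → ℝ) :
    y ∈ KerU hrd U ↔ ∀ k : Fin r,
      ∑ j : Fin d, y j * (U : Matrix (Fin d) (Fin d) ℝ) j (Fin.castLE hrd k) = 0 := by
  unfold KerU
  rw [LinearMap.mem_ker]
  constructor
  · intro h k
    have := congrFun h k
    simpa [Matrix.vecMulLinear_apply, Matrix.vecMul, dotProduct] using this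
  · intro h
    funext k
    simpa [Matrix.vecMulLinear_apply, Matrix.vecMul, dotProduct] using h k

open scoped Classical in
lemma card_filter_le (hrd : r ≤ d) (hr : 1 ≤ r) (U : OG d) (m : ℕ) :
    (Finset.univ.filter fun i : Fin m => C hrd ((i : ℕ) : ℝ) U).card ≤ d - r := by
  by_contra hcon
  push_neg at hcon
  obtain ⟨B, hBsub, hBcard⟩ := Finset.exists_subset_card_eq
    (show d - r + 1 ≤ (Finset.univ.filter fun i : Fin m => C hrd ((i : ℕ) : ℝ) U).card from hcon)
  have hble : d - r + 1 ≤ d := by omega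
  have hBc : Fintype.card B = d - r + 1 := by rw [Fintype.card_coe, hBcard]
  let e2 : Fin (d - r + 1) ≃ B := (Fintype.equivFinOfCardEq hBc).symm
  set t : Fin (d - r + 1) → ℝ := fun a => (((e2 a : Fin m) : ℕ) : ℝ) with ht
  have htinj : Function.Injective t := by
    intro a a' haa
    have : ((e2 a : Fin m) : ℕ) = ((e2 a' : Fin m) : ℕ) := Nat.cast_injective haa
    have : (e2 a : Fin m) = (e2 a' : Fin m) := Fin.val_injective this
    exact e2.injective (Subtype.ext this)
  have hli := vandermonde_li hble t htinj
  -- the vectors lie in KerU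
  have hmem : ∀ a : Fin (d - r + 1), (fun j : Fin d => t a ^ (j : ℕ)) ∈ KerU hrd U := by
    intro a
    rw [mem_KerU_iff]
    intro k
    have hfilter := hBsub (e2 a).2
    rw [Finset.mem_filter] at hfilter
    exact hfilter.2 k
  set famK : Fin (d - r + 1) → KerU hrd U := fun a => ⟨_, hmem a⟩ with hfamK
  have hliK : LinearIndependent ℝ famK := by
    apply LinearIndependent.of_comp (KerU hrd U).subtype
    exact hli
  have hcard := hliK.fintype_card_le_finrank
  rw [finrank_KerU hrd U, Fintype.card_fin] at hcard
  omega


section NullSet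
open scoped Classical

def Zset (hrd : r ≤ d) (z : Fin d) : Set (OG d) :=
  {U | ∀ k : Fin r, (U : Matrix (Fin d) (Fin d) ℝ) z (Fin.castLE hrd k) = 0}

lemma measurable_Zset (hrd : r ≤ d) (z : Fin d) : MeasurableSet (Zset hrd z) := by
  have : Zset hrd z = ⋂ k : Fin r, {U : OG d |
      (U : Matrix (Fin d) (Fin d) ℝ) z (Fin.castLE hrd k) = 0} := by
    ext U; simp [Zset, Set.mem_iInter]
  rw [this]
  exact MeasurableSet.iInter fun k =>
    measurableSet_eq_fun (measurable_entry _ _) measurable_const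

def Yset (hrd : r ≤ d) (t : ℝ) : Set (OG d) := {U | C hrd t U}

lemma measurable_Yset (hrd : r ≤ d) (t : ℝ) : MeasurableSet (Yset hrd t) := by
  have : Yset hrd t = ⋂ k : Fin r, {U : OG d |
      ∑ j : Fin d, (t ^ (j:ℕ)) * (U : Matrix (Fin d) (Fin d) ℝ) j (Fin.castLE hrd k) = 0} := by
    ext U; simp [Yset, C, Set.mem_iInter]
  rw [this]
  refine MeasurableSet.iInter fun k => measurableSet_eq_fun ?_ measurable_const
  exact Finset.measurable_sum _ fun j _ => ((measurable_entry _ _).const_mul _)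

lemma measure_Yset_eq {μH : Measure (OG d)} (hH : IsHaarOrth μH)
    (hrd : r ≤ d) (z : Fin d) (hz : (z : ℕ) = 0) (t : ℝ) :
    μH (Yset hrd t) = μH (Zset hrd z) := by
  set v : Fin d → ℝ := fun j => t ^ (j : ℕ) with hv
  have hvz : v z = 1 := by rw [hv]; simp [hz]
  have hpos : 0 < ∑ j, v j * v j := by
    have h1 : v z * v z = 1 := by rw [hvz]; ring
    have h2 : (1:ℝ) ≤ ∑ j, v j * v j := by
      rw [← h1]
      exact Finset.single_le_sum (fun j _ => mul_self_nonneg (v j)) (Finset.mem_univ z)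
    linarith
  set c : ℝ := (Real.sqrt (∑ j, v j * v j))⁻¹ with hc
  have hcpos : 0 < c := by
    rw [hc]; exact inv_pos.mpr (Real.sqrt_pos.mpr hpos)
  set x : Fin d → ℝ := fun j => c * v j with hx
  have hxunit : ∑ j, x j * x j = 1 := by
    rw [hx]
    simp only
    rw [Finset.sum_congr rfl (fun j _ => show c * v j * (c * v j) = c * c * (v j * v j) by ring),
      ← Finset.mul_sum]
    have hcc : c * c = (∑ j, v j * v j)⁻¹ := by
      rw [hc, ← mul_inv, Real.mul_self_sqrt hpos.le]
    rw [hcc]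
    exact inv_mul_cancel₀ hpos.ne'
  set V : OG d := ⟨houseMat z x, houseMat_mem z x⟩ with hV
  have hpre : (fun U : OG d => V * U) ⁻¹' (Zset hrd z) = Yset hrd t := by
    ext U
    simp only [Set.mem_preimage, Zset, Set.mem_setOf_eq, Yset, C]
    have hentry : ∀ k : Fin r, ((V * U : OG d) : Matrix (Fin d) (Fin d) ℝ) z (Fin.castLE hrd k)
        = c * ∑ j : Fin d, v j * (U : Matrix (Fin d) (Fin d) ℝ) j (Fin.castLE hrd k) := by
      intro k
      show ((V : Matrix (Fin d) (Fin d) ℝ) * (U : Matrix (Fin d) (Fin d) ℝ)) z (Fin.castLE hrd k)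
        = _
      rw [Matrix.mul_apply]
      rw [Finset.sum_congr rfl (fun j _ => by
        rw [show (V : Matrix (Fin d) (Fin d) ℝ) z j = x j from houseMat_row z x hxunit j])]
      rw [Finset.mul_sum]
      exact Finset.sum_congr rfl fun j _ => by rw [hx]; ring
    constructor
    · intro h k
      have h2 := h k
      rw [hentry k] at h2
      rcases mul_eq_zero.mp h2 with h3 | h4
      · exact absurd h3 hcpos.ne'
      · calc ∑ j : Fin d, t ^ (j:ℕ) * (U : Matrix (Fin d) (Fin d) ℝ) j (Fin.castLE hrd k)
            = ∑ j : Fin d, v j * (U : Matrix (Fin d) (Fin d) ℝ) j (Fin.castLE hrd k) := by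
              rw [hv]
          _ = 0 := h4
    · intro h k
      rw [hentry k]
      have h5 : ∑ j : Fin d, v j * (U : Matrix (Fin d) (Fin d) ℝ) j (Fin.castLE hrd k) = 0 := by
        rw [hv]; exact h k
      rw [h5, mul_zero]
  rw [← hpre, measure_invariance hH V (measurable_Zset hrd z)]

lemma Zset_null {μH : Measure (OG d)} (hH : IsHaarOrth μH)
    (hrd : r ≤ d) (hr : 1 ≤ r) (z : Fin d) (hz : (z : ℕ) = 0) :
    μH (Zset hrd z) = 0 := by
  haveI := hH.1
  have key : ∀ m : ℕ, (m : ℝ≥0∞) * μH (Zset hrd z) ≤ ((d - r : ℕ) : ℝ≥0∞) := by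
    intro m
    have h2 : ∑ i : Fin m, μH (Yset hrd ((i:ℕ):ℝ)) = (m : ℝ≥0∞) * μH (Zset hrd z) := by
      have heq : ∀ i : Fin m, μH (Yset hrd ((i:ℕ):ℝ)) = μH (Zset hrd z) :=
        fun i => measure_Yset_eq hH hrd z hz _
      simp only [heq]
      simp [Finset.sum_const, Finset.card_univ, nsmul_eq_mul]
    rw [← h2]
    have h3 : ∑ i : Fin m, μH (Yset hrd ((i:ℕ):ℝ))
        = ∫⁻ U, ∑ i : Fin m, (Yset hrd ((i:ℕ):ℝ)).indicator (fun _ => (1:ℝ≥0∞)) U ∂μH := by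
      rw [lintegral_finset_sum]
      · exact Finset.sum_congr rfl fun i _ =>
          (lintegral_indicator_one (measurable_Yset hrd _)).symm
      · exact fun i _ => (measurable_const.indicator (measurable_Yset hrd _))
    rw [h3]
    have h4 : ∀ U : OG d, ∑ i : Fin m, (Yset hrd ((i:ℕ):ℝ)).indicator (fun _ => (1:ℝ≥0∞)) U
        ≤ ((d - r : ℕ) : ℝ≥0∞) := by
      intro U
      have h5 : ∑ i : Fin m, (Yset hrd ((i:ℕ):ℝ)).indicator (fun _ => (1:ℝ≥0∞)) U
          = ((Finset.univ.filter fun i : Fin m => C hrd ((i:ℕ):ℝ) U).card : ℝ≥0∞) := by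
        rw [← Finset.sum_boole]
        apply Finset.sum_congr rfl
        intro i _
        by_cases h : U ∈ Yset hrd ((i:ℕ):ℝ)
        · rw [Set.indicator_of_mem h, if_pos (by exact h)]
        · rw [Set.indicator_of_notMem h, if_neg (by exact h)]
      rw [h5]
      exact Nat.cast_le.mpr (card_filter_le hrd hr U m)
    calc ∫⁻ U, ∑ i : Fin m, (Yset hrd ((i:ℕ):ℝ)).indicator (fun _ => (1:ℝ≥0∞)) U ∂μH
        ≤ ∫⁻ _, ((d - r : ℕ) : ℝ≥0∞) ∂μH := lintegral_mono h4
      _ = ((d - r : ℕ) : ℝ≥0∞) := by simp [lintegral_const, measure_univ]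
  by_contra h0
  have hfin : μH (Zset hrd z) ≠ ⊤ := measure_ne_top μH _
  set ct := (μH (Zset hrd z)).toReal with hct
  have hctpos : 0 < ct := ENNReal.toReal_pos h0 hfin
  have hbd : ∀ m : ℕ, (m : ℝ) * ct ≤ ((d - r : ℕ) : ℝ) := by
    intro m
    have h6 := ENNReal.toReal_mono (ENNReal.natCast_ne_top _) (key m)
    rw [ENNReal.toReal_mul, ENNReal.toReal_natCast, ENNReal.toReal_natCast] at h6
    exact h6
  obtain ⟨m, hm⟩ := exists_nat_gt (((d - r : ℕ):ℝ) / ct)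
  have h7 := hbd m
  rw [div_lt_iff₀ hctpos] at hm
  linarith

lemma ae_S_ne {μH : Measure (OG d)} (hH : IsHaarOrth μH) (hrd : r ≤ d) (hr : 1 ≤ r)
    (z : Fin d) (hz : (z : ℕ) = 0) :
    ∀ᵐ U ∂μH, S hrd z U ≠ 0 := by
  have hZ : {U : OG d | ¬ S hrd z U ≠ 0} ⊆ Zset hrd z := by
    intro U hU
    simp only [Set.mem_setOf_eq, not_not] at hU
    intro k
    have h2 : ∀ i ∈ Finset.univ, (U : Matrix (Fin d) (Fin d) ℝ) z (Fin.castLE hrd i) *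
        (U : Matrix (Fin d) (Fin d) ℝ) z (Fin.castLE hrd i) = 0 := by
      rw [← Finset.sum_eq_zero_iff_of_nonneg (fun i _ => mul_self_nonneg _)]
      exact hU
    exact mul_self_eq_zero.mp (h2 k (Finset.mem_univ k))
  rw [MeasureTheory.ae_iff]
  exact measure_mono_null hZ (Zset_null hH hrd hr z hz)

end NullSet


section Integrals

lemma measurable_S (hrd : r ≤ d) (z : Fin d) : Measurable (S hrd z) :=
  Finset.measurable_sum _ fun k _ => (measurable_entry _ _).mul (measurable_entry _ _)

lemma measurable_N (hrd : r ≤ d) (z i : Fin d) : Measurable (N hrd z i) :=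
  Finset.measurable_sum _ fun k _ => (measurable_entry _ _).mul (measurable_entry _ _)

lemma measurable_f (hrd : r ≤ d) (z i j : Fin d) : Measurable (f hrd z i j) :=
  ((measurable_S hrd z).inv).mul ((measurable_N hrd z i).mul (measurable_N hrd z j))

lemma integrable_f {μH : Measure (OG d)} [IsProbabilityMeasure μH]
    (hrd : r ≤ d) (z i j : Fin d) : Integrable (f hrd z i j) μH := by
  apply Integrable.mono' (integrable_const 1) (measurable_f hrd z i j).aestronglyMeasurable
  exact ae_of_all _ fun U => by
    simpa [Real.norm_eq_abs] using abs_f_le_one hrd z i j U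

lemma S_flip (hrd : r ≤ d) {z m : Fin d} (hm : m ≠ z) (U : OG d) :
    S hrd z (flip m * U) = S hrd z U := by
  unfold S
  refine Finset.sum_congr rfl fun k _ => ?_
  rw [flip_entry, if_neg (fun h => hm h.symm), one_mul]

lemma N_flip (hrd : r ≤ d) {z m : Fin d} (hm : m ≠ z) (i : Fin d) (U : OG d) :
    N hrd z i (flip m * U) = (if i = m then (-1:ℝ) else 1) * N hrd z i U := by
  unfold N
  rw [Finset.mul_sum]
  refine Finset.sum_congr rfl fun k _ => ?_
  rw [flip_entry, flip_entry, if_neg (show ¬ (z = m) from fun h => hm h.symm), one_mul]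
  ring

lemma integral_f_off_diag {μH : Measure (OG d)} (hH : IsHaarOrth μH)
    (hrd : r ≤ d) {z i j : Fin d} (hij : i ≠ j) (hm : ∃ m : Fin d, m ≠ z ∧
      ((i = m ∧ j ≠ m) ∨ (j = m ∧ i ≠ m))) :
    ∫ U, f hrd z i j U ∂μH = 0 := by
  obtain ⟨m, hmz, hcase⟩ := hm
  have hkey : ∀ U, f hrd z i j (flip m * U) = - f hrd z i j U := by
    intro U
    unfold f
    rw [S_flip hrd hmz, N_flip hrd hmz, N_flip hrd hmz]
    rcases hcase with ⟨h1, h2⟩ | ⟨h1, h2⟩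
    · rw [if_pos h1, if_neg h2]; ring
    · rw [if_pos h1, if_neg h2]; ring
  have hinv := integral_invariance hH (flip m) (measurable_f hrd z i j)
  have h2 : ∫ U, f hrd z i j (flip m * U) ∂μH = - ∫ U, f hrd z i j U ∂μH := by
    rw [show (fun U => f hrd z i j (flip m * U)) = fun U => - f hrd z i j U from funext hkey]
    exact integral_neg _
  rw [h2] at hinv
  linarith

lemma N_perm (hrd : r ≤ d) {z : Fin d} (σ : Equiv.Perm (Fin d)) (hσz : σ z = z)
    (a : Fin d) (U : OG d) :
    N hrd z a (permOG σ * U) = N hrd z (σ a) U := by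
  unfold N
  refine Finset.sum_congr rfl fun k _ => ?_
  rw [perm_entry, perm_entry, hσz]

lemma integral_f_diag_swap {μH : Measure (OG d)} (hH : IsHaarOrth μH)
    (hrd : r ≤ d) {z i i' : Fin d} (hiz : i ≠ z) (hi'z : i' ≠ z) :
    ∫ U, f hrd z i i U ∂μH = ∫ U, f hrd z i' i' U ∂μH := by
  by_cases h : i = i'
  · rw [h]
  set σ := Equiv.swap i i' with hσ
  have hσz : σ z = z :=
    Equiv.swap_apply_of_ne_of_ne (fun hh => hiz hh.symm) (fun hh => hi'z hh.symm)
  have hσi' : σ i' = i := Equiv.swap_apply_right i i'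
  have hkey : ∀ U, f hrd z i' i' (permOG σ * U) = f hrd z i i U := by
    intro U
    unfold f
    rw [N_perm hrd σ hσz, hσi']
    congr 1
    rw [show S hrd z (permOG σ * U) = N hrd z z (permOG σ * U) from rfl,
      N_perm hrd σ hσz, hσz]
    rfl
  have hinv := integral_invariance hH (permOG σ) (measurable_f hrd z i' i')
  rw [show (fun U => f hrd z i' i' (permOG σ * U)) = fun U => f hrd z i i U
    from funext hkey] at hinv
  exact hinv

lemma entry_sq_le_one (U : OG d) (a k : Fin d) :
    (U : Matrix (Fin d) (Fin d) ℝ) a k * (U : Matrix (Fin d) (Fin d) ℝ) a k ≤ 1 := by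
  have h := col_orthonormal' U k k
  rw [if_pos rfl] at h
  rw [← h]
  exact Finset.single_le_sum
    (f := fun j => (U : Matrix (Fin d) (Fin d) ℝ) j k * (U : Matrix (Fin d) (Fin d) ℝ) j k)
    (fun j _ => mul_self_nonneg _) (Finset.mem_univ a)

lemma integrable_entry_sq {μH : Measure (OG d)} [IsProbabilityMeasure μH] (a k : Fin d) :
    Integrable (fun U : OG d =>
      (U : Matrix (Fin d) (Fin d) ℝ) a k * (U : Matrix (Fin d) (Fin d) ℝ) a k) μH := by
  apply Integrable.mono' (integrable_const 1)
    ((measurable_entry a k).mul (measurable_entry a k)).aestronglyMeasurable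
  refine ae_of_all _ fun U => ?_
  rw [Real.norm_eq_abs, abs_of_nonneg (mul_self_nonneg _)]
  exact entry_sq_le_one U a k

lemma integral_entry_sq {μH : Measure (OG d)} (hH : IsHaarOrth μH) (a k : Fin d) :
    ∫ U, (U : Matrix (Fin d) (Fin d) ℝ) a k * (U : Matrix (Fin d) (Fin d) ℝ) a k ∂μH
      = 1 / d := by
  haveI := hH.1
  have hd0 : 0 < d := a.pos
  -- all rows have the same second moment
  have hrow : ∀ a' : Fin d,
      ∫ U, (U : Matrix (Fin d) (Fin d) ℝ) a' k * (U : Matrix (Fin d) (Fin d) ℝ) a' k ∂μH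
      = ∫ U, (U : Matrix (Fin d) (Fin d) ℝ) a k * (U : Matrix (Fin d) (Fin d) ℝ) a k ∂μH := by
    intro a'
    set σ := Equiv.swap a a' with hσ
    have hσa' : σ a' = a := Equiv.swap_apply_right a a'
    have hmeas : Measurable (fun U : OG d =>
        (U : Matrix (Fin d) (Fin d) ℝ) a' k * (U : Matrix (Fin d) (Fin d) ℝ) a' k) :=
      (measurable_entry a' k).mul (measurable_entry a' k)
    have hinv := integral_invariance hH (permOG σ) hmeas
    rw [show (fun U : OG d => (((permOG σ * U : OG d) : Matrix (Fin d) (Fin d) ℝ)) a' k *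
        (((permOG σ * U : OG d) : Matrix (Fin d) (Fin d) ℝ)) a' k)
      = fun U : OG d => (U : Matrix (Fin d) (Fin d) ℝ) a k *
        (U : Matrix (Fin d) (Fin d) ℝ) a k from funext fun U => by
        rw [perm_entry, hσa']] at hinv
    exact hinv.symm
  have hsum : ∑ a' : Fin d,
      ∫ U, (U : Matrix (Fin d) (Fin d) ℝ) a' k * (U : Matrix (Fin d) (Fin d) ℝ) a' k ∂μH
      = 1 := by
    rw [← integral_finset_sum _ (fun a' _ => integrable_entry_sq a' k)]
    have : ∀ U : OG d, ∑ a' : Fin d,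
        (U : Matrix (Fin d) (Fin d) ℝ) a' k * (U : Matrix (Fin d) (Fin d) ℝ) a' k = 1 := by
      intro U
      have h := col_orthonormal' U k k
      rwa [if_pos rfl] at h
    simp_rw [this]
    simp
  rw [Finset.sum_congr rfl (fun a' _ => hrow a'), Finset.sum_const, Finset.card_univ,
    Fintype.card_fin, nsmul_eq_mul] at hsum
  field_simp at hsum ⊢
  linarith [hsum]

lemma integral_S {μH : Measure (OG d)} (hH : IsHaarOrth μH) (hrd : r ≤ d) (z : Fin d) :
    ∫ U, S hrd z U ∂μH = r / d := by
  haveI := hH.1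
  unfold S
  rw [integral_finset_sum _ (fun k _ => integrable_entry_sq z (Fin.castLE hrd k))]
  rw [Finset.sum_congr rfl (fun k _ => integral_entry_sq hH z (Fin.castLE hrd k))]
  rw [Finset.sum_const, Finset.card_univ, Fintype.card_fin, nsmul_eq_mul]
  ring

lemma f_zz (hrd : r ≤ d) (z : Fin d) (U : OG d) : f hrd z z z U = S hrd z U := by
  unfold f
  rw [N_z_eq_S]
  by_cases hS : S hrd z U = 0
  · rw [hS]; ring
  · field_simp

lemma sum_f_diag (hrd : r ≤ d) (z : Fin d) (U : OG d) :
    ∑ i : Fin d, f hrd z i i U = (S hrd z U)⁻¹ * S hrd z U := by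
  unfold f
  rw [← Finset.mul_sum]
  congr 1
  rw [← sum_N_sq hrd z U]
  exact Finset.sum_congr rfl fun i _ => (pow_two (N hrd z i U)).symm

lemma integral_sum_f_diag {μH : Measure (OG d)} (hH : IsHaarOrth μH)
    (hrd : r ≤ d) (hr : 1 ≤ r) (z : Fin d) (hz : (z : ℕ) = 0) :
    ∑ i : Fin d, ∫ U, f hrd z i i U ∂μH = 1 := by
  haveI := hH.1
  rw [← integral_finset_sum _ (fun i _ => integrable_f hrd z i i)]
  have hae : (fun U => ∑ i : Fin d, f hrd z i i U) =ᵐ[μH] fun _ => (1:ℝ) := by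
    filter_upwards [ae_S_ne hH hrd hr z hz] with U hU
    rw [sum_f_diag hrd z U, inv_mul_cancel₀ hU]
  rw [integral_congr_ae hae]
  simp

end Integrals


lemma integral_f_eval {μH : Measure (OG d)} (hH : IsHaarOrth μH)
    (hd : 2 ≤ d) (hr : 1 ≤ r) (hrd : r ≤ d) (z : Fin d) (hz : (z : ℕ) = 0) (i j : Fin d) :
    ∫ U, f hrd z i j U ∂μH =
      if i = j then (if i = z then (r:ℝ)/d else (1 - (r:ℝ)/d)/((d:ℝ)-1)) else 0 := by
  haveI := hH.1
  have hIzz : ∫ U, f hrd z z z U ∂μH = (r:ℝ) / d := by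
    have heq : ∀ U, f hrd z z z U = S hrd z U := f_zz hrd z
    rw [integral_congr_ae (ae_of_all _ heq)]
    exact integral_S hH hrd z
  by_cases hij : i = j
  · subst hij
    by_cases hiz : i = z
    · subst hiz
      rw [if_pos rfl, if_pos rfl]
      exact hIzz
    · rw [if_pos rfl, if_neg hiz]
      have herase : ∀ i' ∈ Finset.univ.erase z,
          (∫ U, f hrd z i' i' U ∂μH) = ∫ U, f hrd z i i U ∂μH := fun i' hi' =>
        integral_f_diag_swap hH hrd (Finset.mem_erase.mp hi').1 hiz
      have hsplit : (∫ U, f hrd z z z U ∂μH) +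
          ∑ i' ∈ Finset.univ.erase z, ∫ U, f hrd z i' i' U ∂μH
          = ∑ i' : Fin d, ∫ U, f hrd z i' i' U ∂μH :=
        Finset.add_sum_erase Finset.univ
          (fun i' => ∫ U, f hrd z i' i' U ∂μH) (Finset.mem_univ z)
      have hsum := integral_sum_f_diag hH hrd hr z hz
      rw [← hsplit] at hsum
      rw [Finset.sum_congr rfl herase, Finset.sum_const,
        Finset.card_erase_of_mem (Finset.mem_univ z), Finset.card_univ, Fintype.card_fin,
        nsmul_eq_mul, hIzz] at hsum
      have hcast : ((d - 1 : ℕ) : ℝ) = (d:ℝ) - 1 := by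
        rw [Nat.cast_sub (by omega), Nat.cast_one]
      rw [hcast] at hsum
      have hd1 : (d:ℝ) - 1 ≠ 0 := by
        have h2 : (2:ℝ) ≤ (d:ℝ) := by exact_mod_cast hd
        linarith
      rw [eq_div_iff hd1]
      linear_combination hsum
  · rw [if_neg hij]
    apply integral_f_off_diag hH hrd hij
    by_cases hiz : i = z
    · exact ⟨j, fun h => hij (by rw [hiz, h]), Or.inr ⟨rfl, hij⟩⟩
    · exact ⟨i, hiz, Or.inl ⟨rfl, fun h => hij h.symm⟩⟩

section Reduction

lemma mulVecE_apply {m n : ℕ} (A : Matrix (Fin m) (Fin n) ℝ) (v : EuclideanSpace ℝ (Fin n))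
    (i : Fin m) : mulVecE A v i = ∑ j : Fin n, A i j * v j := rfl

lemma measurable_matentry {m n : ℕ} (a : Fin m) (k : Fin n) :
    Measurable (fun A : Matrix (Fin m) (Fin n) ℝ => A a k) :=
  (measurable_pi_apply k).comp (measurable_pi_apply a)

lemma measurable_g (e₁ : EuclideanSpace ℝ (Fin d)) (i j : Fin d) :
    Measurable (fun A : Matrix (Fin d) (Fin r) ℝ =>
      (‖mulVecE Aᵀ e₁‖⁻¹ * mulVecE (A * Aᵀ) e₁ i) *
      (‖mulVecE Aᵀ e₁‖⁻¹ * mulVecE (A * Aᵀ) e₁ j)) := by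
  have hcomp : ∀ k : Fin r, Measurable (fun A : Matrix (Fin d) (Fin r) ℝ =>
      mulVecE Aᵀ e₁ k) := by
    intro k
    simp only [mulVecE_apply]
    exact Finset.measurable_sum _ fun a _ => (measurable_matentry a k).mul_const _
  have hvec2 : ∀ a : Fin d, Measurable (fun A : Matrix (Fin d) (Fin r) ℝ =>
      mulVecE (A * Aᵀ) e₁ a) := by
    intro a
    simp only [mulVecE_apply]
    apply Finset.measurable_sum
    intro b _
    apply Measurable.mul_const
    have heq : (fun A : Matrix (Fin d) (Fin r) ℝ => (A * Aᵀ) a b)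
        = fun A => ∑ k : Fin r, A a k * A b k := by
      funext A; rw [Matrix.mul_apply]; rfl
    rw [heq]
    exact Finset.measurable_sum _ fun k _ =>
      (measurable_matentry a k).mul (measurable_matentry b k)
  have hnorm : Measurable (fun A : Matrix (Fin d) (Fin r) ℝ => ‖mulVecE Aᵀ e₁‖) := by
    have heq : (fun A : Matrix (Fin d) (Fin r) ℝ => ‖mulVecE Aᵀ e₁‖)
        = fun A => Real.sqrt (∑ k : Fin r, ‖mulVecE Aᵀ e₁ k‖^2) := by
      funext A; rw [EuclideanSpace.norm_eq]
    rw [heq]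
    exact Real.continuous_sqrt.measurable.comp
      (Finset.measurable_sum _ fun k _ => ((hcomp k).norm.pow_const 2))
  exact (hnorm.inv.mul (hvec2 i)).mul (hnorm.inv.mul (hvec2 j))

lemma g_eval (hd : 2 ≤ d) (hr : 1 ≤ r) (hrd : r ≤ d) (z : Fin d)
    (e₁ : EuclideanSpace ℝ (Fin d)) (he₁ : e₁ = EuclideanSpace.single z 1) (i j : Fin d)
    (U : OG d) :
    (‖mulVecE (Real.sqrt ((d : ℝ) / r) •
        (U : Matrix (Fin d) (Fin d) ℝ).submatrix id (Fin.castLE hrd))ᵀ e₁‖⁻¹ *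
      mulVecE ((Real.sqrt ((d : ℝ) / r) •
        (U : Matrix (Fin d) (Fin d) ℝ).submatrix id (Fin.castLE hrd)) *
        (Real.sqrt ((d : ℝ) / r) •
        (U : Matrix (Fin d) (Fin d) ℝ).submatrix id (Fin.castLE hrd))ᵀ) e₁ i) *
    (‖mulVecE (Real.sqrt ((d : ℝ) / r) •
        (U : Matrix (Fin d) (Fin d) ℝ).submatrix id (Fin.castLE hrd))ᵀ e₁‖⁻¹ *
      mulVecE ((Real.sqrt ((d : ℝ) / r) •
        (U : Matrix (Fin d) (Fin d) ℝ).submatrix id (Fin.castLE hrd)) *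
        (Real.sqrt ((d : ℝ) / r) •
        (U : Matrix (Fin d) (Fin d) ℝ).submatrix id (Fin.castLE hrd))ᵀ) e₁ j)
      = ((d : ℝ) / r) * f hrd z i j U := by
  set M := (U : Matrix (Fin d) (Fin d) ℝ) with hM
  set c : ℝ := Real.sqrt ((d:ℝ)/r) with hc
  set A : Matrix (Fin d) (Fin r) ℝ := c • M.submatrix id (Fin.castLE hrd) with hA
  have hd0 : (0:ℝ) < (d:ℝ)/r := by
    apply div_pos
    · exact_mod_cast Nat.lt_of_lt_of_le (by norm_num) hd
    · exact_mod_cast hr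
  have hcpos : 0 < c := Real.sqrt_pos.mpr hd0
  have hc2 : c * c = (d:ℝ)/r := Real.mul_self_sqrt hd0.le
  have hv : ∀ a : Fin d, e₁ a = if a = z then (1:ℝ) else 0 := by
    intro a; rw [he₁]; exact EuclideanSpace.single_apply z 1 a
  have hAentry : ∀ (a : Fin d) (k : Fin r), A a k = c * M a (Fin.castLE hrd k) := by
    intro a k; rw [hA]; simp [Matrix.smul_apply]
  have hvecT : ∀ k : Fin r, mulVecE Aᵀ e₁ k = c * M z (Fin.castLE hrd k) := by
    intro k
    rw [mulVecE_apply]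
    rw [Finset.sum_congr rfl (fun a (_ : a ∈ Finset.univ) =>
      show Aᵀ k a * e₁ a = if a = z then A a k else 0 by
        rw [Matrix.transpose_apply, hv a]
        by_cases h : a = z <;> simp [h])]
    rw [Finset.sum_ite_eq' Finset.univ z (fun a => A a k)]
    simp [hAentry]
  have hS' : ∑ k : Fin r, M z (Fin.castLE hrd k) * M z (Fin.castLE hrd k) = S hrd z U := rfl
  have hnorm : ‖mulVecE Aᵀ e₁‖ = c * Real.sqrt (S hrd z U) := by
    rw [EuclideanSpace.norm_eq]
    rw [Finset.sum_congr rfl (fun k (_ : k ∈ Finset.univ) => show ‖mulVecE Aᵀ e₁ k‖^2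
      = (c*c) * (M z (Fin.castLE hrd k) * M z (Fin.castLE hrd k)) by
        rw [hvecT k, Real.norm_eq_abs, sq_abs]; ring)]
    rw [← Finset.mul_sum, hS']
    rw [Real.sqrt_mul (by positivity) _, Real.sqrt_mul_self hcpos.le]
  have hvec2 : ∀ a : Fin d, mulVecE (A * Aᵀ) e₁ a = (c*c) * N hrd z a U := by
    intro a
    rw [mulVecE_apply]
    rw [Finset.sum_congr rfl (fun b (_ : b ∈ Finset.univ) => show (A * Aᵀ) a b * e₁ b
        = if b = z then (A * Aᵀ) a b else 0 by
      rw [hv b]; by_cases h : b = z <;> simp [h])]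
    rw [Finset.sum_ite_eq' Finset.univ z (fun b => (A * Aᵀ) a b)]
    simp only [Finset.mem_univ, if_true]
    rw [Matrix.mul_apply]
    unfold N
    rw [Finset.mul_sum]
    apply Finset.sum_congr rfl
    intro k _
    rw [Matrix.transpose_apply, hAentry, hAentry]
    ring
  rw [hnorm, hvec2 i, hvec2 j]
  unfold f
  have hcne : c ≠ 0 := hcpos.ne'
  have hsS : (Real.sqrt (S hrd z U))⁻¹ * (Real.sqrt (S hrd z U))⁻¹ = (S hrd z U)⁻¹ := by
    rw [← mul_inv, Real.mul_self_sqrt (S_nonneg hrd z U)]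
  calc ((c * Real.sqrt (S hrd z U))⁻¹ * (c * c * N hrd z i U)) *
        ((c * Real.sqrt (S hrd z U))⁻¹ * (c * c * N hrd z j U))
      = (c⁻¹ * c) * (c⁻¹ * c) * ((c * c) *
          (((Real.sqrt (S hrd z U))⁻¹ * (Real.sqrt (S hrd z U))⁻¹) *
           (N hrd z i U * N hrd z j U))) := by
        rw [mul_inv]; ring
    _ = ((d:ℝ)/r) * ((S hrd z U)⁻¹ * (N hrd z i U * N hrd z j U)) := by
        rw [inv_mul_cancel₀ hcne, hsS, hc2]
        ring

end Reduction

end S13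

open S13 in
/-- For a (d,r)-Haar matrix `P` and `u := PPᵀe₁/‖Pᵀe₁‖`,
`E[uuᵀ] = (d(r−1))/(r(d−1)) e₁e₁ᵀ + ((d−r)/(r(d−1))) I_d` (entrywise expectations). -/
theorem stmt13 {d r : ℕ} (hd : 2 ≤ d) (hr : 1 ≤ r) (hrd : r ≤ d)
    {Ω : Type*} [MeasureSpace Ω] [IsProbabilityMeasure (ℙ : Measure Ω)]
    (P : Ω → Matrix (Fin d) (Fin r) ℝ) (hP : IsHaarMatrix ℙ hrd P)
    (e₁ : EuclideanSpace ℝ (Fin d)) (he₁ : e₁ = EuclideanSpace.single ⟨0, by omega⟩ 1)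
    (u : Ω → EuclideanSpace ℝ (Fin d))
    (hu : ∀ ω, u ω = ‖mulVecE (P ω)ᵀ e₁‖⁻¹ • mulVecE (P ω * (P ω)ᵀ) e₁) :
    (Matrix.of fun i j => ∫ ω, u ω i * u ω j) =
      (((d : ℝ) * ((r : ℝ) - 1)) / ((r : ℝ) * ((d : ℝ) - 1))) •
          Matrix.vecMulVec (fun i => e₁ i) (fun j => e₁ j)
        + (((d : ℝ) - (r : ℝ)) / ((r : ℝ) * ((d : ℝ) - 1))) •
          (1 : Matrix (Fin d) (Fin d) ℝ) := by
  obtain ⟨μH, hH, hmap⟩ := hP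
  haveI := hH.1
  set z : Fin d := ⟨0, by omega⟩ with hzdef
  have hzv : (z : ℕ) = 0 := rfl
  have he₁' : e₁ = EuclideanSpace.single z 1 := he₁
  set G : (OG d) → Matrix (Fin d) (Fin r) ℝ := fun U =>
    Real.sqrt ((d : ℝ) / r) • (U : Matrix (Fin d) (Fin d) ℝ).submatrix id (Fin.castLE hrd)
    with hG
  have hGmeas : Measurable G := by
    apply measurable_pi_lambda; intro a; apply measurable_pi_lambda; intro k
    have heq : (fun U : OG d => G U a k) = fun U : OG d =>
        Real.sqrt ((d : ℝ) / r) * (U : Matrix (Fin d) (Fin d) ℝ) a (Fin.castLE hrd k) := by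
      funext U; rw [hG]; simp [Matrix.smul_apply]
    rw [heq]
    exact (measurable_entry a (Fin.castLE hrd k)).const_mul _
  have hPmeas : AEMeasurable P ℙ := by
    by_contra hc
    rw [Measure.map_of_not_aemeasurable hc] at hmap
    haveI : IsProbabilityMeasure (Measure.map G μH) :=
      Measure.isProbabilityMeasure_map hGmeas.aemeasurable
    have h1 := congrArg (fun μ : Measure (Matrix (Fin d) (Fin r) ℝ) => μ Set.univ) hmap
    simp [measure_univ] at h1
  have key : ∀ i j : Fin d, (∫ ω, u ω i * u ω j) =
      ((d:ℝ)/r) * ∫ U, f hrd z i j U ∂μH := by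
    intro i j
    have h1 : (fun ω => u ω i * u ω j) = fun ω =>
        (fun A : Matrix (Fin d) (Fin r) ℝ =>
          (‖mulVecE Aᵀ e₁‖⁻¹ * mulVecE (A * Aᵀ) e₁ i) *
          (‖mulVecE Aᵀ e₁‖⁻¹ * mulVecE (A * Aᵀ) e₁ j)) (P ω) := by
      funext ω
      rw [hu ω]
      rfl
    rw [h1]
    calc ∫ ω, (fun A : Matrix (Fin d) (Fin r) ℝ =>
          (‖mulVecE Aᵀ e₁‖⁻¹ * mulVecE (A * Aᵀ) e₁ i) *
          (‖mulVecE Aᵀ e₁‖⁻¹ * mulVecE (A * Aᵀ) e₁ j)) (P ω)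
        = ∫ y, (fun A : Matrix (Fin d) (Fin r) ℝ =>
            (‖mulVecE Aᵀ e₁‖⁻¹ * mulVecE (A * Aᵀ) e₁ i) *
            (‖mulVecE Aᵀ e₁‖⁻¹ * mulVecE (A * Aᵀ) e₁ j)) y ∂(Measure.map P ℙ) :=
          (integral_map hPmeas (measurable_g e₁ i j).aestronglyMeasurable).symm
      _ = ∫ U, (fun A : Matrix (Fin d) (Fin r) ℝ =>
            (‖mulVecE Aᵀ e₁‖⁻¹ * mulVecE (A * Aᵀ) e₁ i) *
            (‖mulVecE Aᵀ e₁‖⁻¹ * mulVecE (A * Aᵀ) e₁ j)) (G U) ∂μH := by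
          rw [hmap]
          exact integral_map hGmeas.aemeasurable (measurable_g e₁ i j).aestronglyMeasurable
      _ = ∫ U, ((d:ℝ)/r) * f hrd z i j U ∂μH := by
          apply integral_congr_ae
          apply ae_of_all
          intro U
          exact g_eval hd hr hrd z e₁ he₁' i j U
      _ = ((d:ℝ)/r) * ∫ U, f hrd z i j U ∂μH := integral_const_mul _ _
  have he : ∀ a : Fin d, e₁ a = if a = z then (1:ℝ) else 0 := fun a => by
    rw [he₁']; exact EuclideanSpace.single_apply z 1 a
  have hrne : (r:ℝ) ≠ 0 := Nat.cast_ne_zero.mpr (by omega)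
  have hdne : (d:ℝ) ≠ 0 := Nat.cast_ne_zero.mpr (by omega)
  have hd1ne : (d:ℝ) - 1 ≠ 0 := by
    have h2 : (2:ℝ) ≤ (d:ℝ) := by exact_mod_cast hd
    linarith
  ext i j
  rw [Matrix.of_apply, key i j, integral_f_eval hH hd hr hrd z hzv i j]
  rw [Matrix.add_apply, Matrix.smul_apply, Matrix.smul_apply, Matrix.vecMulVec_apply,
    Matrix.one_apply, smul_eq_mul, smul_eq_mul, he i, he j]
  by_cases hij : i = j
  · subst hij
    by_cases hiz : i = z
    · subst hiz
      simp only [if_pos rfl, ↓reduceIte]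
      field_simp
      ring
    · simp only [if_pos rfl, if_neg hiz, ↓reduceIte]
      field_simp
      ring
  · simp only [if_neg hij]
    have hzero : (if i = z then (1:ℝ) else 0) * (if j = z then 1 else 0) = 0 := by
      by_cases hiz : i = z
      · rw [if_neg (show ¬ j = z from fun h => hij (by rw [hiz, h]))]
        ring
      · rw [if_neg hiz]
        ring
    rw [hzero]
    ring

end
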